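/- (The case l = 2.) Let m, n ≥ 2 and set N = m + n − 2. Then: (i) the Brauer representation triples for the pair (m,n) with ht > N are exactly the three triples (0, 1^m, 1^n), (0, [2,1^{m−2}], 1^n) and (0, 1^m, [2,1^{n−2}]); (ii) the unique N-excluded triple at depth 1 (i.e. for the pair (m, n−1)) is (0, 1^m, 1^{n−1}); (iii) the unique Brauer representation triple for (m,n) with ht ≤ N which possesses an N-excluded ancestor is (1, 1^{m−1}, 1^{n−1}). -/
import Mathlib


/-- A Brauer representation triple for the pair `(m, n)`: a natural number
`k ≤ min m n`, a partition `γ₊` of `m - k` and a partition `γ₋` of `n - k`. -/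
structure BRT (m n : ℕ) where
  k : ℕ
  k_le : k ≤ min m n
  gp : Nat.Partition (m - k)
  gm : Nat.Partition (n - k)

namespace BRT

/-- The height of a Brauer representation triple: the total number of parts of the
two partitions (the sum of the first-column lengths of the Young diagrams). -/
def ht {m n : ℕ} (γ : BRT m n) : ℕ :=
  Multiset.card γ.gp.parts + Multiset.card γ.gm.parts

end BRT

/-- `AddBox lam mu` : the multiset of parts `mu` is obtained from the multiset of parts
`lam` by adding one box to the Young diagram (either as a new part equal to `1`, or by
increasing one existing part by `1`). -/
def AddBox (lam mu : Multiset ℕ) : Prop :=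
  mu = 1 ::ₘ lam ∨ ∃ a ∈ lam, mu = (a + 1) ::ₘ lam.erase a

/-- `γ'` (a triple at depth `d+1`) is a parent of `γ` (a triple at depth `d`):
either (a) `k' = k`, `γ₊' = γ₊` and `γ₋` is obtained from `γ₋'` by adding one box, or
(b) `k' = k - 1`, `γ₋' = γ₋` and `γ₊'` is obtained from `γ₊` by adding one box. -/
def IsParent {m n₁ n₂ : ℕ} (γ : BRT m n₁) (γ' : BRT m n₂) : Prop :=
  (γ'.k = γ.k ∧ γ'.gp.parts = γ.gp.parts ∧ AddBox γ'.gm.parts γ.gm.parts)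
  ∨ (γ'.k = γ.k - 1 ∧ γ'.gm.parts = γ.gm.parts ∧ AddBox γ.gp.parts γ'.gp.parts)

/-- `IsAncestor m n d d' γ γ'` : the triple `γ'` at depth `d'` for the pair `(m,n)` is an
ancestor of the triple `γ` at depth `d`, i.e. `γ'` is reachable from `γ` by iterating
the parent relation `d' - d` times (one step for each unit increase of depth). -/
inductive IsAncestor (m n : ℕ) : ∀ (d d' : ℕ), BRT m (n - d) → BRT m (n - d') → Prop
  | step {d : ℕ} (γ : BRT m (n - d)) (γ' : BRT m (n - (d + 1))) :
      IsParent γ γ' → IsAncestor m n d (d + 1) γ γ'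
  | tail {d d' : ℕ} {γ : BRT m (n - d)} {γ' : BRT m (n - d')} (γ'' : BRT m (n - (d' + 1))) :
      IsAncestor m n d d' γ γ' → IsParent γ' γ'' → IsAncestor m n d (d' + 1) γ γ''

/-- `Zuniv s` : the number of quadruples `(Δ, k, λ₁, λ₂)` with `Δ ≥ 1`, `k ≥ 0` natural
numbers and `λ₁, λ₂` partitions (of arbitrary natural numbers) such that
`Δ + 2k + |λ₁| + |λ₂| = s`. -/
noncomputable def Zuniv (s : ℕ) : ℕ :=
  Nat.card {q : (ℕ × ℕ) × (Σ a : ℕ, Nat.Partition a) × (Σ a : ℕ, Nat.Partition a) //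
    1 ≤ q.1.1 ∧ q.1.1 + 2 * q.1.2 + q.2.1.1 + q.2.2.1 = s}

/-- `p a` : the number of partitions of `a` (with `p 0 = 1`). -/
def p (a : ℕ) : ℕ := Fintype.card (Nat.Partition a)


section Aux

lemma replicate_one_succ {a : ℕ} (h : 1 ≤ a) :
    Multiset.replicate a 1 = 1 ::ₘ Multiset.replicate (a - 1) 1 := by
  have : a = (a - 1) + 1 := by omega
  rw [this, Multiset.replicate_succ]
  simp

lemma myCard_le_sum (s : Multiset ℕ) (h : ∀ x ∈ s, 1 ≤ x) : Multiset.card s ≤ s.sum := by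
  induction s using Multiset.induction with
  | empty => simp
  | cons a t ih =>
    have ha := h a (Multiset.mem_cons_self a t)
    have ht := ih (fun x hx => h x (Multiset.mem_cons_of_mem hx))
    simp only [Multiset.card_cons, Multiset.sum_cons]
    omega

lemma myEq_replicate (s : Multiset ℕ) (h : ∀ x ∈ s, 1 ≤ x)
    (hs : s.sum ≤ Multiset.card s) : s = Multiset.replicate (Multiset.card s) 1 := by
  induction s using Multiset.induction with
  | empty => simp
  | cons a t ih =>
    have ha := h a (Multiset.mem_cons_self a t)
    have ht : ∀ x ∈ t, 1 ≤ x := fun x hx => h x (Multiset.mem_cons_of_mem hx)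
    have hc := myCard_le_sum t ht
    simp only [Multiset.card_cons, Multiset.sum_cons] at hs ⊢
    have ha1 : a = 1 := by omega
    have h4 := ih ht (by omega)
    conv_lhs => rw [ha1, h4]
    rw [Multiset.replicate_succ]

lemma myEq_two_cons (s : Multiset ℕ) (h : ∀ x ∈ s, 1 ≤ x)
    (hs : s.sum = Multiset.card s + 1) :
    s = 2 ::ₘ Multiset.replicate (Multiset.card s - 1) 1 := by
  induction s using Multiset.induction with
  | empty => simp at hs
  | cons a t ih =>
    have ha := h a (Multiset.mem_cons_self a t)
    have ht : ∀ x ∈ t, 1 ≤ x := fun x hx => h x (Multiset.mem_cons_of_mem hx)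
    have hc := myCard_le_sum t ht
    simp only [Multiset.card_cons, Multiset.sum_cons] at hs ⊢
    have ha2 : a = 1 ∨ a = 2 := by omega
    rcases ha2 with ha1 | ha2
    · have hts : t.sum = Multiset.card t + 1 := by omega
      have hct : 1 ≤ Multiset.card t := by
        by_contra h0
        have h5 : t = 0 := by rw [← Multiset.card_eq_zero]; omega
        rw [h5] at hts
        simp at hts
      have h4 := ih ht hts
      conv_lhs => rw [ha1, h4]
      rw [Multiset.cons_swap, Nat.add_sub_cancel, replicate_one_succ hct]
    · have hts : t.sum ≤ Multiset.card t := by omega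
      have h4 := myEq_replicate t ht hts
      conv_lhs => rw [ha2, h4]
      rw [Nat.add_sub_cancel]

lemma part_card_le {a : ℕ} (P : Nat.Partition a) : Multiset.card P.parts ≤ a := by
  have := myCard_le_sum P.parts (fun x hx => P.parts_pos hx)
  rwa [P.parts_sum] at this

lemma part_eq_replicate {a : ℕ} (P : Nat.Partition a) (h : a ≤ Multiset.card P.parts) :
    P.parts = Multiset.replicate a 1 := by
  have h2 := part_card_le P
  have h3 := myEq_replicate P.parts (fun x hx => P.parts_pos hx)
    (by rw [P.parts_sum]; omega)
  rw [h3]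
  congr 1
  omega

lemma part_eq_two_cons {a : ℕ} (P : Nat.Partition a) (h : Multiset.card P.parts + 1 = a) :
    P.parts = 2 ::ₘ Multiset.replicate (a - 2) 1 := by
  have h3 := myEq_two_cons P.parts (fun x hx => P.parts_pos hx)
    (by rw [P.parts_sum]; omega)
  rw [h3]
  have h4 : Multiset.card P.parts - 1 = a - 2 := by omega
  rw [h4]

lemma IsAncestor.lt_depth {m n d d' : ℕ} {γ : BRT m (n - d)} {γ' : BRT m (n - d')}
    (h : IsAncestor m n d d' γ γ') : d < d' := by
  induction h with
  | step _ _ _ => omega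
  | tail _ _ _ ih => omega

/-- Part (ii) as a standalone lemma. -/
lemma aux2 (m n : ℕ) (hm : 2 ≤ m) (hn : 2 ≤ n) (γ : BRT m (n - 1)) :
    m + n - 2 < γ.ht ↔
      (γ.k = 0 ∧ γ.gp.parts = Multiset.replicate m 1 ∧
        γ.gm.parts = Multiset.replicate (n - 1) 1) := by
  have hk := γ.k_le
  have h1 := part_card_le γ.gp
  have h2 := part_card_le γ.gm
  constructor
  · intro h
    simp only [BRT.ht] at h
    have hk0 : γ.k = 0 := by omega
    have hgp : γ.gp.parts = Multiset.replicate (m - γ.k) 1 :=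
      part_eq_replicate γ.gp (by omega)
    have hgm : γ.gm.parts = Multiset.replicate (n - 1 - γ.k) 1 :=
      part_eq_replicate γ.gm (by omega)
    refine ⟨hk0, ?_, ?_⟩
    · rw [hgp]; congr 1; omega
    · rw [hgm]; congr 1; omega
  · rintro ⟨hk0, hgp, hgm⟩
    simp only [BRT.ht, hgp, hgm, Multiset.card_replicate]
    omega

/-- The all-ones partition of `a`. -/
def onesPartition (a : ℕ) : Nat.Partition a :=
  ⟨Multiset.replicate a 1,
   fun {i} hi => by rw [Multiset.eq_of_mem_replicate hi]; norm_num,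
   by simp⟩

end Aux

/-- The case `l = 2`: for `m, n ≥ 2` and `N = m + n - 2`:
(i) the triples for `(m,n)` with `ht > N` are exactly `(0, 1^m, 1^n)`,
`(0, [2,1^{m-2}], 1^n)` and `(0, 1^m, [2,1^{n-2}])`;
(ii) the unique `N`-excluded triple at depth `1` is `(0, 1^m, 1^{n-1})`;
(iii) the unique triple for `(m,n)` with `ht ≤ N` possessing an `N`-excluded ancestor is
`(1, 1^{m-1}, 1^{n-1})`. -/

theorem stmt17 (m n : ℕ) (hm : 2 ≤ m) (hn : 2 ≤ n) :
    (∀ γ : BRT m (n - 0),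
      m + n - 2 < γ.ht ↔
        (γ.k = 0 ∧
          ((γ.gp.parts = Multiset.replicate m 1 ∧
              γ.gm.parts = Multiset.replicate n 1) ∨
           (γ.gp.parts = 2 ::ₘ Multiset.replicate (m - 2) 1 ∧
              γ.gm.parts = Multiset.replicate n 1) ∨
           (γ.gp.parts = Multiset.replicate m 1 ∧
              γ.gm.parts = 2 ::ₘ Multiset.replicate (n - 2) 1)))) ∧
    (∀ γ : BRT m (n - 1),
      m + n - 2 < γ.ht ↔
        (γ.k = 0 ∧ γ.gp.parts = Multiset.replicate m 1 ∧
          γ.gm.parts = Multiset.replicate (n - 1) 1)) ∧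
    (∀ γ : BRT m (n - 0),
      (γ.ht ≤ m + n - 2 ∧
        ∃ d' : ℕ, ∃ γ' : BRT m (n - d'),
          IsAncestor m n 0 d' γ γ' ∧ m + n - 2 < γ'.ht) ↔
        (γ.k = 1 ∧ γ.gp.parts = Multiset.replicate (m - 1) 1 ∧
          γ.gm.parts = Multiset.replicate (n - 1) 1)) := by
  refine ⟨?_, aux2 m n hm hn, ?_⟩
  · -- part (i)
    intro γ
    have hk := γ.k_le
    have h1 := part_card_le γ.gp
    have h2 := part_card_le γ.gm
    constructor
    · intro h
      simp only [BRT.ht] at h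
      have hk0 : γ.k = 0 := by omega
      refine ⟨hk0, ?_⟩
      have hcase : (m ≤ Multiset.card γ.gp.parts ∧ n ≤ Multiset.card γ.gm.parts) ∨
          (Multiset.card γ.gp.parts + 1 = m ∧ n ≤ Multiset.card γ.gm.parts) ∨
          (m ≤ Multiset.card γ.gp.parts ∧ Multiset.card γ.gm.parts + 1 = n) := by omega
      rcases hcase with ⟨ha, hb⟩ | ⟨ha, hb⟩ | ⟨ha, hb⟩
      · left
        constructor
        · rw [part_eq_replicate γ.gp (by omega)]; congr 1; omega
        · rw [part_eq_replicate γ.gm (by omega)]; congr 1; omega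
      · right; left
        constructor
        · rw [part_eq_two_cons γ.gp (by omega)]
          have e : m - γ.k - 2 = m - 2 := by omega
          rw [e]
        · rw [part_eq_replicate γ.gm (by omega)]; congr 1; omega
      · right; right
        constructor
        · rw [part_eq_replicate γ.gp (by omega)]; congr 1; omega
        · rw [part_eq_two_cons γ.gm (by omega)]
          have e : n - 0 - γ.k - 2 = n - 2 := by omega
          rw [e]
    · rintro ⟨hk0, hcase⟩
      rcases hcase with ⟨ha, hb⟩ | ⟨ha, hb⟩ | ⟨ha, hb⟩ <;>
        simp only [BRT.ht, ha, hb, Multiset.card_replicate, Multiset.card_cons] <;> omega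
  · -- part (iii)
    intro γ
    constructor
    · rintro ⟨hht, d', γ', hanc, hex⟩
      have hd0 : 0 < d' := hanc.lt_depth
      have hk' := γ'.k_le
      have h1' := part_card_le γ'.gp
      have h2' := part_card_le γ'.gm
      have hex2 := hex
      simp only [BRT.ht] at hex2
      have hd1 : d' = 1 := by omega
      subst hd1
      have hpar : IsParent γ γ' := by
        cases hanc with
        | step _ _ hp => exact hp
        | tail _ h0 _ => exact absurd h0.lt_depth (by omega)
      obtain ⟨hk'0, hgp', hgm'⟩ := (aux2 m n hm hn γ').mp hex
      have hk := γ.k_le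
      have h1 := part_card_le γ.gp
      have h2 := part_card_le γ.gm
      simp only [BRT.ht] at hht
      rcases hpar with ⟨hka, hgpa, hab⟩ | ⟨hkb, hgmb, hab⟩
      · exfalso
        have hcp : Multiset.card γ.gp.parts = m := by
          rw [← hgpa, hgp', Multiset.card_replicate]
        have hcm : n - 1 ≤ Multiset.card γ.gm.parts := by
          rcases hab with hx | ⟨a, ha, hx⟩
          · rw [hx, Multiset.card_cons, hgm', Multiset.card_replicate]; omega
          · rw [hx, Multiset.card_cons, Multiset.card_erase_of_mem ha, hgm',
              Multiset.card_replicate, Nat.pred_eq_sub_one]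
            omega
        omega
      · rw [hk'0] at hkb
        have hgm : γ.gm.parts = Multiset.replicate (n - 1) 1 := by rw [← hgmb, hgm']
        have hsum := γ.gm.parts_sum
        rw [hgm] at hsum
        simp only [Multiset.sum_replicate, smul_eq_mul, mul_one] at hsum
        have hk1 : γ.k = 1 := by omega
        refine ⟨hk1, ?_, hgm⟩
        rcases hab with hx | ⟨a, ha, hx⟩
        · have he : (1 : ℕ) ::ₘ Multiset.replicate (m - 1) 1 = 1 ::ₘ γ.gp.parts := by
            rw [← replicate_one_succ (show 1 ≤ m by omega), ← hgp']
            exact hx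
          exact ((Multiset.cons_inj_right 1).mp he).symm
        · exfalso
          have hmem : a + 1 ∈ Multiset.replicate m 1 := by
            rw [← hgp', hx]; exact Multiset.mem_cons_self _ _
          have he1 := Multiset.eq_of_mem_replicate hmem
          have he2 := γ.gp.parts_pos ha
          omega
    · rintro ⟨hk1, hgp, hgm⟩
      have hht : γ.ht ≤ m + n - 2 := by
        simp only [BRT.ht, hgp, hgm, Multiset.card_replicate]; omega
      refine ⟨hht, 1, ⟨0, Nat.zero_le _, onesPartition (m - 0), onesPartition (n - 1 - 0)⟩,
        ?_, ?_⟩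
      · exact IsAncestor.step γ _ (Or.inr ⟨by rw [hk1], by simp [onesPartition, hgm],
          Or.inl (by simp only [onesPartition, hgp]
                     exact replicate_one_succ (show 1 ≤ m by omega))⟩)
      · simp only [BRT.ht, onesPartition, Multiset.card_replicate]
        omega
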